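/- Let (X,μ) be a measure space and J,Q ⊆ (0,∞) with m_J = inf J > 0, m_Q = inf Q > 0 and m_Q ∈ Q. Then IL_{J,Q}(X,μ) = A ∩ B, where A = {f ∈ ⋂_{p∈J,q∈Q} L_{p,q}(X,μ) : for every q ∈ Q, sup_{p∈J} ‖f‖_{L_{p,q}} < ∞} and B = {f ∈ ⋂_{p∈J,q∈Q} L_{p,q}(X,μ) : for every p ∈ J, sup_{q∈Q} ‖f‖_{L_{p,q}} < ∞}. -/

import Mathlib

open MeasureTheory Set ENNReal

noncomputable section

variable {X : Type*} [MeasurableSpace X]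

/-- The distribution function `d_f(α) = μ {x : |f x| > α}`. -/
def distFun (μ : Measure X) (f : X → ℝ) (α : ℝ) : ℝ≥0∞ :=
  μ {x | α < |f x|}

/-- The decreasing rearrangement `f*(t) = inf {s > 0 : d_f(s) ≤ t}`, with `inf ∅ = ∞`. -/
def rearr (μ : Measure X) (f : X → ℝ) (t : ℝ) : ℝ≥0∞ :=
  ⨅ (s : ℝ) (_ : 0 < s ∧ distFun μ f s ≤ ENNReal.ofReal t), ENNReal.ofReal s

/-- The Lorentz quasi-norm `‖f‖_{L_{p,q}}` (for `q = ∞` the weak norm `sup_t t^{1/p} f*(t)`). -/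
def lorentzNorm (μ : Measure X) (f : X → ℝ) (p q : ℝ≥0∞) : ℝ≥0∞ :=
  if q = ∞ then ⨆ t ∈ Ioi (0 : ℝ), ENNReal.ofReal t ^ (1 / p).toReal * rearr μ f t
  else (∫⁻ t in Ioi (0 : ℝ),
      (ENNReal.ofReal t ^ (1 / p).toReal * rearr μ f t) ^ q.toReal / ENNReal.ofReal t) ^
      (1 / q.toReal)

/-- The Lorentz space `L_{p,q}(X, μ)`, as the set of measurable functions with
finite Lorentz quasi-norm. -/
def Lorentz (μ : Measure X) (p q : ℝ≥0∞) : Set (X → ℝ) :=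
  {f | Measurable f ∧ lorentzNorm μ f p q < ∞}

/-- `IL_{J,Q}(X,μ)`: functions in every `L_{p,q}`, `p ∈ J`, `q ∈ Q`, with uniformly
bounded norms. -/
def ILJQ (μ : Measure X) (J Q : Set ℝ≥0∞) : Set (X → ℝ) :=
  {f | (∀ p ∈ J, ∀ q ∈ Q, f ∈ Lorentz μ p q) ∧
    (⨆ p ∈ J, ⨆ q ∈ Q, lorentzNorm μ f p q) < ∞}

lemma lint_pow (c t : ℝ) (hc : 0 < c) (ht : 0 < t) :
    ∫⁻ s in Ioo (0:ℝ) t, ENNReal.ofReal s ^ (c - 1) = ENNReal.ofReal (t ^ c / c) := by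
  have h1 : ∫⁻ s in Ioo (0:ℝ) t, ENNReal.ofReal s ^ (c - 1)
      = ∫⁻ s in Ioo (0:ℝ) t, ENNReal.ofReal (s ^ (c - 1)) := by
    refine setLIntegral_congr_fun measurableSet_Ioo ?_
    intro s hs
    simp only [ENNReal.ofReal_rpow_of_pos hs.1]
  have hint : IntervalIntegrable (fun s : ℝ => s ^ (c - 1)) volume 0 t :=
    intervalIntegral.intervalIntegrable_rpow' (by linarith)
  have hInt : IntegrableOn (fun s : ℝ => s ^ (c - 1)) (Ioo 0 t) := by
    rw [← integrableOn_Ioc_iff_integrableOn_Ioo]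
    exact (intervalIntegrable_iff_integrableOn_Ioc_of_le ht.le).mp hint
  have h2 : ∫ s in (0:ℝ)..t, s ^ (c - 1) = t ^ c / c := by
    rw [integral_rpow (Or.inl (by linarith))]
    simp [sub_add_cancel, Real.zero_rpow hc.ne']
  have h3 : ∫ s in Ioo (0:ℝ) t, s ^ (c - 1) = t ^ c / c := by
    rw [setIntegral_congr_set (Ioo_ae_eq_Ioc (a := (0:ℝ)) (b := t)),
      ← intervalIntegral.integral_of_le ht.le, h2]
  rw [h1, ← h3]
  refine (ofReal_integral_eq_lintegral_ofReal hInt ?_).symm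
  filter_upwards [ae_restrict_mem measurableSet_Ioo] with s hs
  exact Real.rpow_nonneg hs.1.le _

lemma rpow_one_div_rpow (x : ℝ≥0∞) {e : ℝ} (he : e ≠ 0) : (x ^ (1/e)) ^ e = x := by
  rw [← ENNReal.rpow_mul, one_div, inv_mul_cancel₀ he, ENNReal.rpow_one]

lemma rearr_anti (μ : Measure X) (f : X → ℝ) : Antitone (rearr μ f) := by
  intro t t' h
  refine le_iInf fun s => le_iInf fun hs => ?_
  exact iInf₂_le s ⟨hs.1, hs.2.trans (ENNReal.ofReal_le_ofReal h)⟩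

lemma lorentz_key (μ : Measure X) (f : X → ℝ) (p q q0 : ℝ≥0∞)
    (hp0 : 0 < p) (hpt : p ≠ ∞) (hq00 : 0 < q0) (hq0t : q0 ≠ ∞) (hqt : q ≠ ∞)
    (hqq : q0 ≤ q) (hN : lorentzNorm μ f p q0 ≠ ∞) :
    lorentzNorm μ f p q ≤
      max 1 (ENNReal.ofReal ((1/p).toReal * q0.toReal) ^ (1/q0.toReal)) *
        lorentzNorm μ f p q0 := by
  set a := (1/p).toReal with ha_def
  set e := q0.toReal with he_def
  set r := q.toReal with hr_def
  set g := rearr μ f with hg_def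
  set N := lorentzNorm μ f p q0 with hN_def
  have ha : 0 < a := ENNReal.toReal_pos (by simp [hpt]) (by simp [hp0.ne'])
  have he : 0 < e := ENNReal.toReal_pos hq00.ne' hq0t
  have her : e ≤ r := ENNReal.toReal_mono hqt hqq
  have hr : 0 < r := he.trans_le her
  set c := a * e with hc_def
  have hc : 0 < c := mul_pos ha he
  set K := ENNReal.ofReal c ^ (1/e) with hK_def
  have hKt : K ≠ ∞ := ENNReal.rpow_ne_top_of_nonneg (by positivity) ofReal_ne_top
  -- N ^ e equals the integral
  have hNe : N ^ e = ∫⁻ s in Ioi (0:ℝ), (ENNReal.ofReal s ^ a * g s) ^ e / ENNReal.ofReal s := by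
    rw [hN_def, lorentzNorm, if_neg hq0t, rpow_one_div_rpow _ he.ne']
  -- pointwise bound : F t ≤ K * N
  have key : ∀ t : ℝ, 0 < t → ENNReal.ofReal t ^ a * g t ≤ K * N := by
    intro t ht
    have h1 : g t ^ e * ENNReal.ofReal (t ^ c / c) ≤ N ^ e := by
      rw [hNe]
      calc g t ^ e * ENNReal.ofReal (t ^ c / c)
          = g t ^ e * ∫⁻ s in Ioo (0:ℝ) t, ENNReal.ofReal s ^ (c - 1) := by
            rw [lint_pow c t hc ht]
        _ = ∫⁻ s in Ioo (0:ℝ) t, g t ^ e * ENNReal.ofReal s ^ (c - 1) := by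
            rw [lintegral_const_mul]
            measurability
        _ ≤ ∫⁻ s in Ioo (0:ℝ) t, (ENNReal.ofReal s ^ a * g s) ^ e / ENNReal.ofReal s := by
            refine setLIntegral_mono' measurableSet_Ioo fun s hs => ?_
            have hs0 : ENNReal.ofReal s ≠ 0 := by
              simp [ENNReal.ofReal_eq_zero, not_le, hs.1]
            have : g t ^ e * ENNReal.ofReal s ^ (c - 1)
                = (ENNReal.ofReal s ^ a * g t) ^ e / ENNReal.ofReal s := by
              rw [ENNReal.mul_rpow_of_nonneg _ _ he.le, ← ENNReal.rpow_mul,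
                ENNReal.rpow_sub _ _ hs0 ofReal_ne_top, ENNReal.rpow_one, ← hc_def]
              rw [mul_comm (g t ^ e), ENNReal.div_eq_inv_mul, ENNReal.div_eq_inv_mul]
              ring
            rw [this]
            refine ENNReal.div_le_div_right ?_ _
            refine ENNReal.rpow_le_rpow ?_ he.le
            exact mul_le_mul_right (rearr_anti μ f hs.2.le) _
        _ ≤ ∫⁻ s in Ioi (0:ℝ), (ENNReal.ofReal s ^ a * g s) ^ e / ENNReal.ofReal s :=
            lintegral_mono_set (fun s hs => hs.1)
    -- turn h1 into the bound
    have hc0 : ENNReal.ofReal c ≠ 0 := by simp [ENNReal.ofReal_eq_zero, not_le, hc]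
    have h2 : (ENNReal.ofReal t ^ a * g t) ^ e ≤ ENNReal.ofReal c * N ^ e := by
      have htc : ENNReal.ofReal (t ^ c / c) = ENNReal.ofReal t ^ c / ENNReal.ofReal c := by
        rw [ENNReal.ofReal_div_of_pos hc, ENNReal.ofReal_rpow_of_pos ht]
      have := mul_le_mul_right h1 (ENNReal.ofReal c)
      rw [htc] at this
      calc (ENNReal.ofReal t ^ a * g t) ^ e
          = ENNReal.ofReal t ^ c * g t ^ e := by
            rw [ENNReal.mul_rpow_of_nonneg _ _ he.le, ← ENNReal.rpow_mul, ← hc_def]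
        _ = ENNReal.ofReal c * (g t ^ e * (ENNReal.ofReal t ^ c / ENNReal.ofReal c)) := by
            rw [mul_comm (g t ^ e), ← mul_assoc, ENNReal.mul_div_cancel' (fun h => absurd h hc0) (fun h => absurd h ofReal_ne_top)]
        _ ≤ ENNReal.ofReal c * N ^ e := this
    calc ENNReal.ofReal t ^ a * g t
        = ((ENNReal.ofReal t ^ a * g t) ^ e) ^ (1/e) := by
          rw [← ENNReal.rpow_mul, mul_one_div, div_self he.ne', ENNReal.rpow_one]
      _ ≤ (ENNReal.ofReal c * N ^ e) ^ (1/e) := ENNReal.rpow_le_rpow h2 (by positivity)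
      _ = K * N := by
          rw [ENNReal.mul_rpow_of_nonneg _ _ (by positivity : (0:ℝ) ≤ 1/e), ← hK_def,
            ← ENNReal.rpow_mul, mul_one_div, div_self he.ne', ENNReal.rpow_one]
  -- main estimate
  have hMt : (K * N) ^ (r - e) ≠ ∞ :=
    ENNReal.rpow_ne_top_of_nonneg (by linarith) (ENNReal.mul_ne_top hKt hN)
  have main : lorentzNorm μ f p q ^ r ≤ (K * N) ^ (r - e) * N ^ e := by
    have : lorentzNorm μ f p q ^ r
        = ∫⁻ t in Ioi (0:ℝ), (ENNReal.ofReal t ^ a * g t) ^ r / ENNReal.ofReal t := by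
      rw [lorentzNorm, if_neg hqt, rpow_one_div_rpow _ hr.ne']
    rw [this, hNe]
    calc ∫⁻ t in Ioi (0:ℝ), (ENNReal.ofReal t ^ a * g t) ^ r / ENNReal.ofReal t
        ≤ ∫⁻ t in Ioi (0:ℝ),
            (K * N) ^ (r - e) * ((ENNReal.ofReal t ^ a * g t) ^ e / ENNReal.ofReal t) := by
          refine setLIntegral_mono' measurableSet_Ioi fun t ht => ?_
          have hsplit : (ENNReal.ofReal t ^ a * g t) ^ r
              = (ENNReal.ofReal t ^ a * g t) ^ (r - e) * (ENNReal.ofReal t ^ a * g t) ^ e := by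
            rw [← ENNReal.rpow_add_of_nonneg _ _ (by linarith) he.le, sub_add_cancel]
          rw [hsplit, mul_div_assoc]
          exact mul_le_mul_left (ENNReal.rpow_le_rpow (key t ht) (by linarith)) _
      _ = (K * N) ^ (r - e)
            * ∫⁻ t in Ioi (0:ℝ), (ENNReal.ofReal t ^ a * g t) ^ e / ENNReal.ofReal t :=
          lintegral_const_mul' _ _ hMt
  have final : lorentzNorm μ f p q ≤ K ^ ((r - e) * (1/r)) * N := by
    calc lorentzNorm μ f p q
        = (lorentzNorm μ f p q ^ r) ^ (1/r) := by
          rw [← ENNReal.rpow_mul, mul_one_div, div_self hr.ne', ENNReal.rpow_one]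
      _ ≤ ((K * N) ^ (r - e) * N ^ e) ^ (1/r) := ENNReal.rpow_le_rpow main (by positivity)
      _ = K ^ ((r - e) * (1/r)) * N := by
          rw [ENNReal.mul_rpow_of_nonneg _ _ (sub_nonneg.mpr her), mul_assoc,
            ← ENNReal.rpow_add_of_nonneg _ _ (by linarith) he.le, sub_add_cancel,
            ENNReal.mul_rpow_of_nonneg _ _ (by positivity : (0:ℝ) ≤ 1/r),
            ← ENNReal.rpow_mul K (r-e) (1/r), ← ENNReal.rpow_mul N r (1/r),
            mul_one_div r r, div_self hr.ne', ENNReal.rpow_one]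
  refine final.trans (mul_le_mul_left ?_ N)
  calc K ^ ((r - e) * (1/r)) ≤ (max 1 K) ^ ((r - e) * (1/r)) :=
        ENNReal.rpow_le_rpow (le_max_right _ _) (mul_nonneg (by linarith) (by positivity))
    _ ≤ (max 1 K) ^ (1:ℝ) := by
        refine ENNReal.rpow_le_rpow_of_exponent_le (le_max_left _ _) ?_
        rw [mul_one_div, div_le_one hr]
        linarith
    _ = max 1 K := ENNReal.rpow_one _

/-- If `m_Q ∈ Q`, then `IL_{J,Q} = A ∩ B` where `A` (resp. `B`) consists of the
functions whose norms are uniformly bounded in `p ∈ J` for each fixed `q ∈ Q`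
(resp. uniformly bounded in `q ∈ Q` for each fixed `p ∈ J`). -/
theorem stmt15 (μ : Measure X) (J Q : Set ℝ≥0∞)
    (hJ : J ⊆ Ioo 0 ∞) (hQ : Q ⊆ Ioo 0 ∞)
    (hmJ : 0 < sInf J) (hmQ : 0 < sInf Q) (hmQQ : sInf Q ∈ Q) :
    ILJQ μ J Q =
      {f : X → ℝ | (∀ p ∈ J, ∀ q ∈ Q, f ∈ Lorentz μ p q) ∧
          ∀ q ∈ Q, (⨆ p ∈ J, lorentzNorm μ f p q) < ∞} ∩
      {f : X → ℝ | (∀ p ∈ J, ∀ q ∈ Q, f ∈ Lorentz μ p q) ∧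
          ∀ p ∈ J, (⨆ q ∈ Q, lorentzNorm μ f p q) < ∞} := by
  ext f
  simp only [ILJQ, mem_setOf_eq, mem_inter_iff]
  constructor
  · rintro ⟨hm, hsup⟩
    refine ⟨⟨hm, fun q hq => ?_⟩, ⟨hm, fun p hp => ?_⟩⟩
    · refine lt_of_le_of_lt ?_ hsup
      exact iSup₂_le fun p hp => (le_biSup (fun q => lorentzNorm μ f p q) hq).trans
        (le_biSup (fun p => ⨆ q ∈ Q, lorentzNorm μ f p q) hp)
    · refine lt_of_le_of_lt ?_ hsup
      exact iSup₂_le fun q hq => ((le_biSup (fun q => lorentzNorm μ f p q) hq).trans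
        (le_biSup (fun p => ⨆ q ∈ Q, lorentzNorm μ f p q) hp))
  · rintro ⟨⟨hm, hA⟩, -⟩
    refine ⟨hm, ?_⟩
    have hq00 : 0 < sInf Q := hmQ
    have hq0t : sInf Q ≠ ∞ := (hQ hmQQ).2.ne
    set C := max 1 (ENNReal.ofReal ((1 / sInf J).toReal * (sInf Q).toReal)
      ^ (1 / (sInf Q).toReal)) with hC
    have hClt : C < ∞ :=
      max_lt one_lt_top (ENNReal.rpow_lt_top_of_nonneg (by positivity) ofReal_ne_top)
    have hS := hA (sInf Q) hmQQ
    refine lt_of_le_of_lt (iSup₂_le fun p hp => iSup₂_le fun q hq => ?_)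
      (ENNReal.mul_lt_top hClt hS)
    have h1 := lorentz_key μ f p q (sInf Q) (hJ hp).1 (hJ hp).2.ne hq00 hq0t
      (hQ hq).2.ne (sInf_le hq) (hm p hp (sInf Q) hmQQ).2.ne
    refine h1.trans (mul_le_mul' ?_ (le_biSup (fun p => lorentzNorm μ f p (sInf Q)) hp))
    refine max_le_max le_rfl ?_
    refine ENNReal.rpow_le_rpow (ENNReal.ofReal_le_ofReal ?_) (by positivity)
    refine mul_le_mul_of_nonneg_right ?_ ENNReal.toReal_nonneg
    refine ENNReal.toReal_mono ?_ ?_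
    · rw [one_div]
      exact ENNReal.inv_ne_top.mpr hmJ.ne'
    · rw [one_div, one_div]
      exact ENNReal.inv_le_inv.mpr (sInf_le hp)
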